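/- The 21 cells of the triangle of size 6 admit a fractional assignment x_{i,j} ∈ ℚ≥0 (with 1 ≤ j ≤ i ≤ 6) satisfying all row sums Σ_j x_{i,j} ≤ 1, all column sums Σ_i x_{i,j} ≤ 1, and all diagonal sums Σ x_{i,i−k} ≤ 1, with total sum Σ x_{i,j} = 30/7. In particular, the LP relaxation value LP(6) satisfies LP(6) ≥ 30/7 > N(6) = 4. -/

import Mathlib

/-- The triangle of size `n`: cells `(a,b)` with `1 ≤ b ≤ a ≤ n`. -/
def Triangle (n : ℕ) : Finset (ℕ × ℕ) :=
  (Finset.Icc 1 n ×ˢ Finset.Icc 1 n).filter (fun p => p.2 ≤ p.1)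

/-- No two distinct cells share a row (`a`), a column (`b`), or a standard
diagonal (value `a - b`). -/
def NonAttacking (S : Finset (ℕ × ℕ)) : Prop :=
  ∀ p ∈ S, ∀ q ∈ S, p ≠ q →
    p.1 ≠ q.1 ∧ p.2 ≠ q.2 ∧ (p.1 : ℤ) - p.2 ≠ (q.1 : ℤ) - q.2

/-- `N(n)`: the maximum size of a non-attacking set of cells in the triangle of size `n`. -/
noncomputable def maxDots (n : ℕ) : ℕ :=
  sSup {m : ℕ | ∃ S : Finset (ℕ × ℕ), S ⊆ Triangle n ∧ NonAttacking S ∧ S.card = m}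

/-- A fractional assignment on the cells of the triangle of size `6` is feasible
if it is nonnegative and every row sum, column sum, and diagonal sum is at most `1`. -/
def Feasible6 (x : ℕ → ℕ → ℚ) : Prop :=
  (∀ i ∈ Finset.Icc 1 6, ∀ j ∈ Finset.Icc 1 i, 0 ≤ x i j) ∧
  (∀ i ∈ Finset.Icc 1 6, ∑ j ∈ Finset.Icc 1 i, x i j ≤ 1) ∧
  (∀ j ∈ Finset.Icc 1 6, ∑ i ∈ Finset.Icc j 6, x i j ≤ 1) ∧
  (∀ k ∈ Finset.range 6, ∑ i ∈ Finset.Icc (k + 1) 6, x i (i - k) ≤ 1)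

/-- The value of the LP relaxation for `n = 6`. -/
noncomputable def LP6 : ℝ :=
  sSup {v : ℝ | ∃ x : ℕ → ℕ → ℚ, Feasible6 x ∧
    ((∑ i ∈ Finset.Icc 1 6, ∑ j ∈ Finset.Icc 1 i, x i j : ℚ) : ℝ) = v}

/-! ### Auxiliary material -/

/-- The explicit fractional witness. -/
def w (i j : ℕ) : ℚ :=
  if i = 2 ∧ j = 1 then 2/7 else
  if i = 3 ∧ j = 2 then 5/7 else
  if i = 3 ∧ j = 1 then 2/7 else
  if i = 4 ∧ j = 4 then 5/7 else
  if i = 4 ∧ j = 1 then 2/7 else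
  if i = 5 ∧ j = 5 then 2/7 else
  if i = 5 ∧ j = 3 then 3/7 else
  if i = 5 ∧ j = 2 then 1/7 else
  if i = 5 ∧ j = 1 then 1/7 else
  if i = 6 ∧ j = 4 then 2/7 else
  if i = 6 ∧ j = 3 then 4/7 else
  if i = 6 ∧ j = 2 then 1/7 else 0

lemma wfeas : Feasible6 w := by
  refine ⟨?_, ?_, ?_, ?_⟩
  · intro i hi j hj
    fin_cases hi <;> fin_cases hj <;> norm_num [w]
  · intro i hi
    fin_cases hi <;> norm_num [Finset.sum_Icc_succ_top, w]
  · intro j hj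
    fin_cases hj <;> norm_num [Finset.sum_Icc_succ_top, w]
  · intro k hk
    fin_cases hk <;> norm_num [Finset.sum_Icc_succ_top, w]

lemma wtotal : ∑ i ∈ Finset.Icc 1 6, ∑ j ∈ Finset.Icc 1 i, w i j = 30 / 7 := by
  norm_num [Finset.sum_Icc_succ_top, w]

/-- The pairwise non-attacking relation. -/
@[reducible] def Ok (p q : ℕ × ℕ) : Prop :=
  p.1 ≠ q.1 ∧ p.2 ≠ q.2 ∧ (p.1 : ℤ) - p.2 ≠ (q.1 : ℤ) - q.2

instance (p q : ℕ × ℕ) : Decidable (Ok p q) := by unfold Ok; infer_instance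

instance (S : Finset (ℕ × ℕ)) : Decidable (NonAttacking S) := by
  unfold NonAttacking; infer_instance

set_option maxRecDepth 40000 in
lemma no5 : ∀ p1 ∈ Triangle 6, ∀ p2 ∈ Triangle 6, Ok p1 p2 →
    ∀ p3 ∈ Triangle 6, Ok p1 p3 → Ok p2 p3 →
    ∀ p4 ∈ Triangle 6, Ok p1 p4 → Ok p2 p4 → Ok p3 p4 →
    ∀ p5 ∈ Triangle 6, Ok p1 p5 → Ok p2 p5 → Ok p3 p5 → Ok p4 p5 → False := by
  decide

lemma card_le_four {S : Finset (ℕ × ℕ)} (hS : S ⊆ Triangle 6) (hNA : NonAttacking S) :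
    S.card ≤ 4 := by
  by_contra h
  push_neg at h
  obtain ⟨T, hTS, hT5⟩ := Finset.exists_subset_card_eq (s := S) (n := 5) h
  have hTtri : T ⊆ Triangle 6 := hTS.trans hS
  have hTNA : NonAttacking T := fun p hp q hq hpq => hNA p (hTS hp) q (hTS hq) hpq
  obtain ⟨p1, T4, h1, rfl, hc4⟩ := Finset.card_eq_succ.mp hT5
  obtain ⟨p2, T3, h2, rfl, hc3⟩ := Finset.card_eq_succ.mp hc4
  obtain ⟨p3, T2, h3, rfl, hc2⟩ := Finset.card_eq_succ.mp hc3
  obtain ⟨p4, T1, h4, rfl, hc1⟩ := Finset.card_eq_succ.mp hc2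
  obtain ⟨p5, T0, h5, rfl, hc0⟩ := Finset.card_eq_succ.mp hc1
  have m1 : p1 ∈ insert p1 (insert p2 (insert p3 (insert p4 (insert p5 T0)))) := by simp
  have m2 : p2 ∈ insert p1 (insert p2 (insert p3 (insert p4 (insert p5 T0)))) := by simp
  have m3 : p3 ∈ insert p1 (insert p2 (insert p3 (insert p4 (insert p5 T0)))) := by simp
  have m4 : p4 ∈ insert p1 (insert p2 (insert p3 (insert p4 (insert p5 T0)))) := by simp
  have m5 : p5 ∈ insert p1 (insert p2 (insert p3 (insert p4 (insert p5 T0)))) := by simp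
  have ne12 : p1 ≠ p2 := fun e => h1 (e ▸ (by simp))
  have ne13 : p1 ≠ p3 := fun e => h1 (e ▸ (by simp))
  have ne14 : p1 ≠ p4 := fun e => h1 (e ▸ (by simp))
  have ne15 : p1 ≠ p5 := fun e => h1 (e ▸ (by simp))
  have ne23 : p2 ≠ p3 := fun e => h2 (e ▸ (by simp))
  have ne24 : p2 ≠ p4 := fun e => h2 (e ▸ (by simp))
  have ne25 : p2 ≠ p5 := fun e => h2 (e ▸ (by simp))
  have ne34 : p3 ≠ p4 := fun e => h3 (e ▸ (by simp))
  have ne35 : p3 ≠ p5 := fun e => h3 (e ▸ (by simp))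
  have ne45 : p4 ≠ p5 := fun e => h4 (e ▸ (by simp))
  exact no5 p1 (hTtri m1) p2 (hTtri m2) (hTNA p1 m1 p2 m2 ne12)
    p3 (hTtri m3) (hTNA p1 m1 p3 m3 ne13) (hTNA p2 m2 p3 m3 ne23)
    p4 (hTtri m4) (hTNA p1 m1 p4 m4 ne14) (hTNA p2 m2 p4 m4 ne24) (hTNA p3 m3 p4 m4 ne34)
    p5 (hTtri m5) (hTNA p1 m1 p5 m5 ne15) (hTNA p2 m2 p5 m5 ne25) (hTNA p3 m3 p5 m5 ne35)
    (hTNA p4 m4 p5 m5 ne45)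

def W4 : Finset (ℕ × ℕ) := {(1,1), (4,2), (5,4), (6,3)}

lemma maxDots_six : maxDots 6 = 4 := by
  have hset : {m : ℕ | ∃ S : Finset (ℕ × ℕ), S ⊆ Triangle 6 ∧ NonAttacking S ∧ S.card = m}
      = Set.Iic 4 := by
    ext m
    constructor
    · rintro ⟨S, hsub, hNA, rfl⟩
      exact card_le_four hsub hNA
    · intro hm
      have hW4 : (W4 : Finset (ℕ × ℕ)).card = 4 := by decide
      obtain ⟨T, hTW, hTm⟩ := Finset.exists_subset_card_eq (s := W4) (n := m) (by rw [hW4]; exact hm)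
      refine ⟨T, ?_, ?_, hTm⟩
      · exact hTW.trans (by decide)
      · have : NonAttacking W4 := by decide
        exact fun p hp q hq hpq => this p (hTW hp) q (hTW hq) hpq
  unfold maxDots
  rw [hset]
  exact csSup_Iic

theorem lp_six : (∃ x : ℕ → ℕ → ℚ, Feasible6 x ∧
      ∑ i ∈ Finset.Icc 1 6, ∑ j ∈ Finset.Icc 1 i, x i j = 30 / 7) ∧
    (30 / 7 : ℝ) ≤ LP6 ∧ ((maxDots 6 : ℝ) < 30 / 7) ∧ maxDots 6 = 4 := by
  refine ⟨⟨w, wfeas, wtotal⟩, ?_, ?_, maxDots_six⟩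
  · -- 30/7 ≤ LP6
    apply le_csSup
    · -- bounded above by 6
      refine ⟨6, ?_⟩
      rintro v ⟨x, hx, rfl⟩
      have hrow := hx.2.1
      have : (∑ i ∈ Finset.Icc 1 6, ∑ j ∈ Finset.Icc 1 i, x i j : ℚ) ≤ 6 := by
        calc (∑ i ∈ Finset.Icc 1 6, ∑ j ∈ Finset.Icc 1 i, x i j : ℚ)
            ≤ ∑ i ∈ Finset.Icc 1 6, (1 : ℚ) := Finset.sum_le_sum hrow
          _ = 6 := by norm_num
      calc ((∑ i ∈ Finset.Icc 1 6, ∑ j ∈ Finset.Icc 1 i, x i j : ℚ) : ℝ)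
          ≤ ((6 : ℚ) : ℝ) := by exact_mod_cast this
        _ = 6 := by norm_num
    · exact ⟨w, wfeas, by rw [wtotal]; norm_num⟩
  · rw [maxDots_six]; norm_num
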